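/- Let G be a finite connected ℓ-regular loopless graph on n vertices with adjacency eigenvalues ℓ = λ₀ ≥ λ₁ ≥ … ≥ λ_{n−1}. If max(|λ₁|, |λ_{n−1}|) ≤ μ for some μ > 0, then χ(G) ≥ ℓ/μ. -/

import Mathlib

open Finset Matrix
set_option linter.unusedSectionVars false

variable {V : Type} [Fintype V] [DecidableEq V]

lemma adjHerm (G : SimpleGraph V) [DecidableRel G.Adj] : (G.adjMatrix ℝ).IsHermitian := by
  unfold Matrix.IsHermitian
  ext i j
  simp [Matrix.conjTranspose_apply, SimpleGraph.adj_comm]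

lemma max_adj (G : SimpleGraph V) [DecidableRel G.Adj] (ℓ : ℕ) (hreg : G.IsRegularOfDegree ℓ)
    (y : V → ℝ) (hy : (G.adjMatrix ℝ) *ᵥ y = (ℓ : ℝ) • y)
    {v : V} (hv : ∀ w, y w ≤ y v) {u : V} (hadj : G.Adj v u) : y u = y v := by
  have h1 : (ℓ : ℝ) * y v = ∑ w ∈ G.neighborFinset v, y w := by
    have := congrFun hy v
    simp only [Matrix.mulVec, SimpleGraph.adjMatrix_dotProduct, Pi.smul_apply,
      smul_eq_mul] at this
    rw [← this]
  have hsum : ∑ w ∈ G.neighborFinset v, y w = ∑ w ∈ G.neighborFinset v, y v := by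
    rw [Finset.sum_const, nsmul_eq_mul]
    rw [show (#(G.neighborFinset v) : ℝ) = (ℓ : ℝ) by exact_mod_cast congrArg Nat.cast (hreg v)]
    exact h1.symm
  exact (Finset.sum_eq_sum_iff_of_le (fun w _ => hv w)).1 hsum u
    (by simpa [SimpleGraph.mem_neighborFinset] using hadj)

lemma eig_const (G : SimpleGraph V) [DecidableRel G.Adj] (ℓ : ℕ)
    (hreg : G.IsRegularOfDegree ℓ) (hconn : G.Connected)
    (y : V → ℝ) (hy : (G.adjMatrix ℝ) *ᵥ y = (ℓ : ℝ) • y) :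
    ∃ a : ℝ, ∀ u, y u = a := by
  have : Nonempty V := hconn.nonempty
  obtain ⟨v, -, hv⟩ := Finset.exists_max_image Finset.univ y ⟨Classical.arbitrary V, Finset.mem_univ _⟩
  refine ⟨y v, fun u => ?_⟩
  have hv' : ∀ w, y w ≤ y v := fun w => hv w (Finset.mem_univ w)
  obtain ⟨p⟩ := (hconn v u)
  clear hv
  induction p with
  | nil => rfl
  | @cons a b c h p ih =>
      have h2 : y b = y a := max_adj G ℓ hreg y hy hv' h
      exact (ih (fun w => h2 ▸ hv' w)).trans h2

lemma inner_dot (x y : EuclideanSpace ℝ V) : (inner ℝ x y : ℝ) = x ⬝ᵥ y := by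
  simp [PiLp.inner_apply, dotProduct, RCLike.inner_apply, mul_comm]

lemma inner_basis_sum (b : OrthonormalBasis V ℝ (EuclideanSpace ℝ V)) (x y : EuclideanSpace ℝ V) :
    (inner ℝ x y : ℝ) = ∑ i, (inner ℝ (b i) x : ℝ) * (inner ℝ (b i) y : ℝ) := by
  have h := b.orthonormal.inner_sum (fun i => (inner ℝ (b i) x : ℝ)) (fun i => (inner ℝ (b i) y : ℝ)) univ
  rw [b.sum_repr' x, b.sum_repr' y] at h
  simpa using h

lemma quad_bound (G : SimpleGraph V) [DecidableRel G.Adj] (ℓ : ℕ)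
    (hreg : G.IsRegularOfDegree ℓ) (hconn : G.Connected) (μ : ℝ) (hμ : 0 < μ)
    (heig : ∀ l : ℝ,
      (∃ x : V → ℝ, x ≠ 0 ∧ (G.adjMatrix ℝ).mulVec x = l • x) → l ≠ ℓ → |l| ≤ μ)
    (hA : (G.adjMatrix ℝ).IsHermitian)
    (x : V → ℝ) (hx : ∑ v, x v = 0) :
    |x ⬝ᵥ (G.adjMatrix ℝ *ᵥ x)| ≤ μ * (x ⬝ᵥ x) := by
  classical
  have key : ∀ i, (hA.eigenvectorBasis i : V → ℝ) ⬝ᵥ (G.adjMatrix ℝ *ᵥ x)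
      = hA.eigenvalues i * ((hA.eigenvectorBasis i : V → ℝ) ⬝ᵥ x) := by
    intro i
    have h1 : (hA.eigenvectorBasis i : V → ℝ) ⬝ᵥ (G.adjMatrix ℝ *ᵥ x)
        = (G.adjMatrix ℝ *ᵥ (hA.eigenvectorBasis i : V → ℝ)) ⬝ᵥ x := by
      rw [Matrix.dotProduct_mulVec, ← Matrix.mulVec_transpose,
        SimpleGraph.transpose_adjMatrix]
    have h2 : G.adjMatrix ℝ *ᵥ (hA.eigenvectorBasis i : V → ℝ)
        = hA.eigenvalues i • (hA.eigenvectorBasis i : V → ℝ) := hA.mulVec_eigenvectorBasis i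
    rw [h1, h2, smul_dotProduct]; rfl
  set c : V → ℝ := fun i => (hA.eigenvectorBasis i : V → ℝ) ⬝ᵥ x with hc
  have e1 : x ⬝ᵥ (G.adjMatrix ℝ *ᵥ x) = ∑ i, hA.eigenvalues i * (c i * c i) := by
    have h := inner_basis_sum hA.eigenvectorBasis (WithLp.toLp 2 x) (WithLp.toLp 2 (G.adjMatrix ℝ *ᵥ x))
    simp only [inner_dot, WithLp.ofLp_toLp] at h
    rw [h]
    exact Finset.sum_congr rfl fun i _ => by rw [key i]; ring
  have e2 : x ⬝ᵥ x = ∑ i, c i * c i := by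
    have h := inner_basis_sum hA.eigenvectorBasis (WithLp.toLp 2 x) (WithLp.toLp 2 x)
    simp only [inner_dot, WithLp.ofLp_toLp] at h
    exact h
  have hbnd : ∀ i, |hA.eigenvalues i| * (c i * c i) ≤ μ * (c i * c i) := by
    intro i
    rcases eq_or_ne (c i) 0 with h0 | h0
    · simp [h0]
    · have hib : |hA.eigenvalues i| ≤ μ := by
        refine heig (hA.eigenvalues i)
          ⟨(hA.eigenvectorBasis i : V → ℝ), ?_, hA.mulVec_eigenvectorBasis i⟩ ?_
        · intro hz
          exact hA.eigenvectorBasis.orthonormal.ne_zero i (by ext v; exact congrFun hz v)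
        · intro hll
          obtain ⟨a, ha⟩ := eig_const G ℓ hreg hconn (hA.eigenvectorBasis i : V → ℝ)
            (by rw [← hll]; exact hA.mulVec_eigenvectorBasis i)
          apply h0
          rw [hc]
          simp only [dotProduct]
          calc ∑ v, (hA.eigenvectorBasis i : V → ℝ) v * x v = ∑ v, a * x v :=
                Finset.sum_congr rfl (fun v _ => by rw [ha v])
            _ = a * ∑ v, x v := by rw [Finset.mul_sum]
            _ = 0 := by rw [hx]; ring
      exact mul_le_mul_of_nonneg_right hib (mul_self_nonneg _)
  rw [e1, e2]
  calc |∑ i, hA.eigenvalues i * (c i * c i)|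
      ≤ ∑ i, |hA.eigenvalues i * (c i * c i)| := Finset.abs_sum_le_sum_abs _ _
    _ ≤ ∑ i, μ * (c i * c i) := by
        refine Finset.sum_le_sum fun i _ => ?_
        rw [abs_mul, abs_of_nonneg (mul_self_nonneg (c i))]
        exact hbnd i
    _ = μ * ∑ i, c i * c i := by rw [Finset.mul_sum]





/-- **Spectral lower bound for the chromatic number.** If `G` is a finite connected
`ℓ`-regular (loopless) graph all of whose adjacency eigenvalues other than `ℓ` have
absolute value at most `μ > 0`, then `χ(G) ≥ ℓ/μ`. -/
theorem chromatic_ge_of_spectral_gap {V : Type} [Fintype V] [DecidableEq V]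
    (G : SimpleGraph V) [DecidableRel G.Adj]
    (ℓ : ℕ) (hreg : G.IsRegularOfDegree ℓ) (hconn : G.Connected)
    (μ : ℝ) (hμ : 0 < μ)
    (heig : ∀ l : ℝ,
      (∃ x : V → ℝ, x ≠ 0 ∧ (G.adjMatrix ℝ).mulVec x = l • x) → l ≠ ℓ → |l| ≤ μ) :
    ∀ c : ℕ, G.Colorable c → (ℓ : ℝ) / μ ≤ c := by
  classical
  intro c hcol
  have hV : Nonempty V := hconn.nonempty
  obtain ⟨C⟩ := hcol
  have hc0 : 0 < c := (C (Classical.arbitrary V)).pos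
  rcases Nat.eq_zero_or_pos ℓ with hl0 | hl0
  · subst hl0; simp
  -- pick the largest color class
  set n := Fintype.card V with hn
  have hn0 : 0 < n := Fintype.card_pos
  obtain ⟨i, -, hi⟩ := Finset.exists_max_image (univ : Finset (Fin c))
    (fun b => #(univ.filter fun v => C v = b)) ⟨C (Classical.arbitrary V), mem_univ _⟩
  set S : Finset V := univ.filter (fun v => C v = i) with hS
  set s := #S with hscard
  have hnc : n ≤ c * s := by
    have h1 : n = ∑ b : Fin c, #(univ.filter fun v => C v = b) := by
      rw [hn, ← Finset.card_univ]
      exact Finset.card_eq_sum_card_fiberwise (fun v _ => mem_univ (C v))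
    rw [h1]
    calc ∑ b : Fin c, #(univ.filter fun v => C v = b) ≤ ∑ _b : Fin c, s :=
          Finset.sum_le_sum fun b _ => hi b (mem_univ b)
      _ = c * s := by simp [Finset.sum_const, mul_comm]
  have hs0 : 0 < s := by
    rcases Nat.eq_zero_or_pos s with h | h
    · rw [h, mul_zero] at hnc; omega
    · exact h
  -- independence of S
  have hind : ∀ v ∈ S, ∀ u ∈ S, ¬ G.Adj v u := by
    intro v hv u hu hadj
    have h1 : C v = i := (Finset.mem_filter.1 hv).2
    have h2 : C u = i := (Finset.mem_filter.1 hu).2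
    exact C.valid hadj (h1.trans h2.symm)
  set A := G.adjMatrix ℝ with hAdef
  set one : V → ℝ := fun _ => 1 with hone
  set y : V → ℝ := fun v => if v ∈ S then 1 else 0 with hy
  have hnR : (0:ℝ) < n := by exact_mod_cast hn0
  set k : ℝ := s / n with hk
  set x : V → ℝ := y - k • one with hxdef
  -- basic dot product facts
  have d1 : one ⬝ᵥ y = (s:ℝ) := by
    simp [dotProduct, hy, hone, hscard]
  have d2 : y ⬝ᵥ one = (s:ℝ) := by
    simp [dotProduct, hy, hone, hscard]
  have d3 : y ⬝ᵥ y = (s:ℝ) := by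
    simp [dotProduct, hy, hscard, ite_and]
  have d4 : one ⬝ᵥ one = (n:ℝ) := by
    simp [dotProduct, hone, hn]
  have f1 : A *ᵥ one = (ℓ:ℝ) • one := by
    funext v
    show (G.adjMatrix ℝ *ᵥ Function.const V (1:ℝ)) v = _
    rw [SimpleGraph.adjMatrix_mulVec_const_apply_of_regular hreg]
    simp [hone]
  have vm : ∀ w : V → ℝ, w ᵥ* A = A *ᵥ w := by
    intro w
    rw [← Matrix.mulVec_transpose, hAdef, SimpleGraph.transpose_adjMatrix]
  have dAy : y ⬝ᵥ (A *ᵥ y) = 0 := by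
    show ∑ v, y v * (A *ᵥ y) v = 0
    apply Finset.sum_eq_zero
    intro v _
    by_cases hv : v ∈ S
    · have hz : (A *ᵥ y) v = 0 := by
        rw [hAdef, SimpleGraph.adjMatrix_mulVec_apply]
        apply Finset.sum_eq_zero
        intro u hu
        have hadj : G.Adj v u := (G.mem_neighborFinset v u).1 hu
        have huS : u ∉ S := fun huS => hind v hv u huS hadj
        simp [hy, huS]
      rw [hz, mul_zero]
    · simp [hy, hv]
  have dA1y : one ⬝ᵥ (A *ᵥ y) = (ℓ:ℝ) * s := by
    rw [Matrix.dotProduct_mulVec, vm, f1, smul_dotProduct, d1, smul_eq_mul]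
  have dyA1 : y ⬝ᵥ (A *ᵥ one) = (ℓ:ℝ) * s := by
    rw [f1, dotProduct_smul, d2, smul_eq_mul]
  have d1A1 : one ⬝ᵥ (A *ᵥ one) = (ℓ:ℝ) * n := by
    rw [f1, dotProduct_smul, d4, smul_eq_mul]
  have hxA : x ⬝ᵥ (A *ᵥ x) = (ℓ:ℝ) * (k^2 * n - 2*k*s) := by
    simp only [hxdef, Matrix.mulVec_sub, Matrix.mulVec_smul, sub_dotProduct,
      dotProduct_sub, smul_dotProduct, dotProduct_smul,
      dAy, dA1y, dyA1, d1A1, smul_eq_mul]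
    ring
  have hxx : x ⬝ᵥ x = (s:ℝ) - 2*k*s + k^2 * n := by
    simp only [hxdef, sub_dotProduct, dotProduct_sub, smul_dotProduct,
      dotProduct_smul, d1, d2, d3, d4, smul_eq_mul]
    ring
  have hsum : ∑ v, x v = 0 := by
    simp only [hxdef, Pi.sub_apply, Pi.smul_apply, smul_eq_mul, Finset.sum_sub_distrib]
    have h1 : ∑ v, y v = (s:ℝ) := by simp [hy, hscard]
    have h2 : ∑ _v : V, k * one _v = (n:ℝ) * k := by
      simp [hone, Finset.sum_const, hn, mul_comm]
    rw [h1, h2, hk]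
    field_simp
    ring
  have hq := quad_bound G ℓ hreg hconn μ hμ heig (adjHerm G) x hsum
  rw [hxA, hxx] at hq
  have hval : (ℓ:ℝ) * (k^2 * n - 2*k*s) = -((ℓ:ℝ) * s^2 / n) := by
    rw [hk]; field_simp; ring
  rw [hval, abs_neg, abs_of_nonneg (by positivity)] at hq
  -- hq : ℓ s²/n ≤ μ (s - 2ks + k²n)
  have hrhs : μ * ((s:ℝ) - 2*k*s + k^2*n) = μ * ((s:ℝ) - (s:ℝ)^2/n) := by
    rw [hk]; field_simp; ring
  rw [hrhs] at hq
  have hsR : (0:ℝ) < s := by exact_mod_cast hs0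
  have hncR : (n:ℝ) ≤ (c:ℝ) * s := by exact_mod_cast hnc
  have h5 : (ℓ:ℝ) * s^2 ≤ μ * ((s:ℝ) * n - (s:ℝ)^2) := by
    have h := mul_le_mul_of_nonneg_right hq (le_of_lt hnR)
    have e1 : (ℓ:ℝ) * s^2 / n * n = (ℓ:ℝ) * s^2 := by field_simp
    have e2 : μ * ((s:ℝ) - (s:ℝ)^2/n) * n = μ * ((s:ℝ) * n - (s:ℝ)^2) := by
      field_simp
    rw [e1, e2] at h
    exact h
  rw [div_le_iff₀ hμ]
  -- ℓ ≤ c * μ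
  nlinarith [mul_le_mul_of_nonneg_left hncR (mul_nonneg hμ.le hsR.le), mul_pos hsR hsR,
    mul_nonneg (mul_nonneg hμ.le hsR.le) hsR.le, sq_nonneg (s:ℝ)]
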